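/- For any polynomial functor p, the terminal p-coalgebra νp is isomorphic to the limit of the ℕ-indexed tower of sets defined by A₀ = 1 (a singleton) and A_{n+1} = p(A_n), with projections π₀ : A₁ → A₀ the unique map and π_{n+1} = p(π_n). -/

import Mathlib

/-- The tower `A₀ = 1`, `A_{n+1} = p(A_n)`. -/
def towerA (P : PFunctor.{0}) : ℕ → Type
  | 0 => PUnit
  | n + 1 => P.Obj (towerA P n)

/-- The projections of the tower: `π₀` the unique map, `π_{n+1} = p(π_n)`. -/
def towerProj (P : PFunctor.{0}) : ∀ n : ℕ, towerA P (n + 1) → towerA P n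
  | 0, _ => PUnit.unit
  | n + 1, x => P.map (towerProj P n) x

open PFunctor PFunctor.Approx

/-- Equivalence between Mathlib's `CofixA` approximations and the tower. -/
def towerEquiv (P : PFunctor.{0}) : ∀ n : ℕ, CofixA P n ≃ towerA P n
  | 0 =>
    { toFun := fun _ => PUnit.unit
      invFun := fun _ => CofixA.continue
      left_inv := fun x => by cases x; rfl
      right_inv := fun x => by cases x; rfl }
  | n + 1 =>
    { toFun := fun x => ⟨head' x, fun i => towerEquiv P n (children' x i)⟩
      invFun := fun x => CofixA.intro x.1 fun i => (towerEquiv P n).symm (x.2 i)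
      left_inv := fun x => by
        cases x with
        | intro a f =>
          show CofixA.intro a (fun i => (towerEquiv P n).symm (towerEquiv P n (f i))) = _
          simp
      right_inv := fun x => by
        cases x with
        | mk a f =>
          show (⟨a, fun i => towerEquiv P n ((towerEquiv P n).symm (f i))⟩ : P.Obj _) = _
          simp }

theorem towerEquiv_truncate (P : PFunctor.{0}) :
    ∀ (n : ℕ) (x : CofixA P (n + 1)),
      towerProj P n (towerEquiv P (n + 1) x) = towerEquiv P n (truncate x) := by
  intro n
  induction n with
  | zero => intro x; rfl
  | succ n ih =>
    intro x
    cases x with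
    | intro a f =>
      show P.map (towerProj P n) ⟨a, _⟩ = _
      simp only [PFunctor.map, truncate, towerEquiv, Equiv.coe_fn_mk]
      exact congrArg (fun g => (⟨a, g⟩ : P.Obj (towerA P n))) (funext fun i => ih (f i))

theorem agree_of_truncate (P : PFunctor.{0}) :
    ∀ (n : ℕ) (x : CofixA P n) (y : CofixA P (n + 1)), truncate y = x → Agree x y := by
  intro n
  induction n with
  | zero => intro x y _; exact agree_trivial
  | succ n ih =>
    intro x y h
    cases y with
    | intro a f =>
      subst h
      exact Agree.intro _ _ fun i => ih _ (f i) rfl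

/-- The terminal `p`-coalgebra (the M-type of `p`) is isomorphic to the limit of the
tower `A₀ = 1`, `A_{n+1} = p(A_n)`: the set of compatible sequences. -/
theorem terminal_coalgebra_is_limit_of_tower (P : PFunctor.{0}) :
    Nonempty (P.M ≃ { x : ∀ n : ℕ, towerA P n // ∀ n : ℕ, towerProj P n (x (n + 1)) = x n }) := by
  refine ⟨{
    toFun := fun m => ⟨fun n => towerEquiv P n (m.approx n), fun n => ?_⟩
    invFun := fun x => ⟨fun n => (towerEquiv P n).symm (x.1 n), fun n => ?_⟩
    left_inv := fun m => ?_
    right_inv := fun x => ?_ }⟩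
  · rw [towerEquiv_truncate, truncate_eq_of_agree _ _ (m.consistent n)]
  · apply agree_of_truncate
    apply (towerEquiv P n).injective
    rw [← towerEquiv_truncate]
    simp [x.2 n]
  · apply PFunctor.M.ext'
    intro n
    simp
  · ext n
    simp
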